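/- Let $T$ be a finite set, $S \subseteq T$, $\alpha \in (0, 1/2)$. Consider a sequence of weight functions $w^{(0)}, w^{(1)}, \ldots, w^{(m)}$ on $T$ with $w^{(0)} \equiv 1$, each $w^{(i+1)} \le w^{(i)}$ pointwise, and suppose each step satisfies $\frac{w^{(i)}(S) - w^{(i+1)}(S)}{w^{(i)}(S)} \le \frac{1}{24 \lg(2/\alpha)} \cdot \frac{w^{(i)}(T) - w^{(i+1)}(T)}{w^{(i)}(T)}$, and that $w^{(i)}(T) \ge \alpha|T|/2$ for all $i \le m$. Then $w^{(m)}(S) \ge 3|S|/4$. -/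

import Mathlib

open Finset

lemma key34 : ((3:ℝ)/4) ≤ (2:ℝ) ^ (-(1/24) : ℝ) := by
  have h2 : (0:ℝ) < (2:ℝ) ^ (-(1/24) : ℝ) := Real.rpow_pos_of_pos (by norm_num) _
  have h24 : ((2:ℝ) ^ (-(1/24) : ℝ)) ^ (24:ℕ) = 1/2 := by
    rw [← Real.rpow_natCast ((2:ℝ) ^ (-(1/24) : ℝ)) 24, ← Real.rpow_mul (by norm_num)]
    norm_num
  rw [← pow_le_pow_iff_left₀ (show (0:ℝ) ≤ 3/4 by norm_num) h2.le (show (24:ℕ) ≠ 0 by norm_num),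
    h24]
  norm_num

/-- Along any sequence of "nice" downweighting steps in which each step removes from `S` a
relative fraction at most `1/(24 lg(2/α))` of the relative fraction removed from `T`, and
in which the total weight of `T` stays above `α|T|/2`, the weight of `S` stays above `3|S|/4`. -/
theorem stmt14 {γ : Type*} (T S : Finset γ) (hST : S ⊆ T)
    (a : ℝ) (ha : 0 < a) (ha2 : a < 1 / 2)
    (hS : a * T.card ≤ (S.card : ℝ))
    (m : ℕ) (w : ℕ → γ → ℝ)
    (hw0 : ∀ x ∈ T, w 0 x = 1)
    (hwb : ∀ i ≤ m, ∀ x ∈ T, 0 ≤ w i x ∧ w i x ≤ 1)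
    (hmono : ∀ i < m, ∀ x ∈ T, w (i + 1) x ≤ w i x)
    (hstep : ∀ i < m,
      ((∑ x ∈ S, w i x) - ∑ x ∈ S, w (i + 1) x) / (∑ x ∈ S, w i x) ≤
        1 / (24 * Real.logb 2 (2 / a)) *
          (((∑ x ∈ T, w i x) - ∑ x ∈ T, w (i + 1) x) / (∑ x ∈ T, w i x)))
    (hlow : ∀ i ≤ m, a * T.card / 2 ≤ ∑ x ∈ T, w i x) :
    3 * S.card / 4 ≤ ∑ x ∈ S, w m x := by
  rcases T.eq_empty_or_nonempty with rfl | hTne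
  · have : S = ∅ := Finset.subset_empty.mp hST
    subst this
    simp
  have hTcard : (0:ℝ) < T.card := by exact_mod_cast Finset.card_pos.mpr hTne
  -- the constant c
  set L : ℝ := Real.logb 2 (2 / a) with hLdef
  have hL2 : (2:ℝ) ≤ L := by
    have h4 : (4:ℝ) ≤ 2 / a := by
      rw [le_div_iff₀ ha]; linarith
    have hmono' : Real.logb 2 4 ≤ L := Real.logb_le_logb_of_le (by norm_num) (by norm_num) h4
    have h4' : Real.logb 2 4 = 2 := by
      rw [show (4:ℝ) = (2:ℝ) ^ ((2:ℕ):ℝ) by rw [Real.rpow_natCast]; norm_num,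
        Real.logb_rpow (by norm_num) (by norm_num)]
      norm_num
    linarith [h4' ▸ hmono']
  set c : ℝ := 1 / (24 * L) with hcdef
  have hLpos : (0:ℝ) < L := by linarith
  have hcpos : 0 < c := by positivity
  have hc1 : c ≤ 1 / 48 := by
    rw [hcdef, div_le_div_iff₀ (by positivity) (by norm_num)]
    nlinarith
  -- positivity of T-sums
  have Tpos : ∀ i ≤ m, (0:ℝ) < ∑ x ∈ T, w i x := fun i hi =>
    lt_of_lt_of_le (by positivity) (hlow i hi)
  have S0 : ∑ x ∈ S, w 0 x = (S.card : ℝ) := by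
    rw [Finset.sum_congr rfl fun x hx => hw0 x (hST hx)]; simp
  have T0 : ∑ x ∈ T, w 0 x = (T.card : ℝ) := by
    rw [Finset.sum_congr rfl fun x hx => hw0 x hx]; simp
  have hScard : (0:ℝ) < S.card := lt_of_lt_of_le (by positivity) hS
  -- main induction
  have main : ∀ i ≤ m, (0 < ∑ x ∈ S, w i x) ∧
      (S.card : ℝ) * (∑ x ∈ T, w i x) ^ c ≤ (∑ x ∈ S, w i x) * (T.card : ℝ) ^ c := by
    intro i
    induction i with
    | zero => intro _; rw [S0, T0]; exact ⟨hScard, le_refl _⟩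
    | succ i ih =>
      intro hi1
      have him : i < m := hi1
      obtain ⟨hSipos, hIH⟩ := ih him.le
      have hTi := Tpos i him.le
      have hTi' := Tpos (i+1) hi1
      -- the ratio
      set t : ℝ := (∑ x ∈ T, w (i+1) x) / (∑ x ∈ T, w i x) with htdef
      have htpos : 0 < t := div_pos hTi' hTi
      have hTle : (∑ x ∈ T, w (i+1) x) ≤ ∑ x ∈ T, w i x :=
        Finset.sum_le_sum fun x hx => hmono i him x hx
      have ht1 : t ≤ 1 := by rw [htdef, div_le_one hTi]; exact hTle
      -- from hstep: S_{i+1} ≥ S_i (1 - c (1 - t))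
      have hstep' := hstep i him
      have hkey : (∑ x ∈ S, w i x) * (1 - c * (1 - t)) ≤ ∑ x ∈ S, w (i+1) x := by
        rw [div_le_iff₀ hSipos] at hstep'
        have hdiv : ((∑ x ∈ T, w i x) - ∑ x ∈ T, w (i+1) x) / (∑ x ∈ T, w i x) = 1 - t := by
          rw [htdef]; field_simp
        rw [hdiv] at hstep'
        nlinarith [hstep']
      -- Bernoulli: t ^ c ≤ 1 - c * (1 - t)
      have hbern : t ^ c ≤ 1 - c * (1 - t) := by
        have := rpow_one_add_le_one_add_mul_self (s := t - 1) (by linarith) hcpos.le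
          (by linarith)
        simp only [add_sub_cancel] at this
        linarith
      have hmul : (∑ x ∈ S, w i x) * t ^ c ≤ ∑ x ∈ S, w (i+1) x :=
        le_trans (by nlinarith [hbern]) hkey
      have hS'pos : 0 < ∑ x ∈ S, w (i+1) x :=
        lt_of_lt_of_le (by positivity) hmul
      refine ⟨hS'pos, ?_⟩
      have hTsplit : (∑ x ∈ T, w (i+1) x) ^ c = (∑ x ∈ T, w i x) ^ c * t ^ c := by
        rw [htdef, Real.div_rpow hTi'.le hTi.le]
        field_simp
      calc (S.card : ℝ) * (∑ x ∈ T, w (i+1) x) ^ c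
          = ((S.card : ℝ) * (∑ x ∈ T, w i x) ^ c) * t ^ c := by rw [hTsplit]; ring
        _ ≤ ((∑ x ∈ S, w i x) * (T.card : ℝ) ^ c) * t ^ c := by
            apply mul_le_mul_of_nonneg_right hIH (by positivity)
        _ = ((∑ x ∈ S, w i x) * t ^ c) * (T.card : ℝ) ^ c := by ring
        _ ≤ (∑ x ∈ S, w (i+1) x) * (T.card : ℝ) ^ c :=
            mul_le_mul_of_nonneg_right hmul (by positivity)
  obtain ⟨hSm, hmain⟩ := main m le_rfl
  -- lower bound (∑ T, w m) ^ c ≥ (a/2)^c * |T|^c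
  have hTm : (a * T.card / 2) ≤ ∑ x ∈ T, w m x := hlow m le_rfl
  have h1 : (a/2 * T.card) ^ c ≤ (∑ x ∈ T, w m x) ^ c :=
    Real.rpow_le_rpow (by positivity) (by linarith) hcpos.le
  have h2 : (a/2 * (T.card:ℝ)) ^ c = (a/2) ^ c * (T.card:ℝ) ^ c :=
    Real.mul_rpow (by positivity) (by positivity)
  have hfinal : (S.card : ℝ) * (a/2) ^ c ≤ ∑ x ∈ S, w m x := by
    have hTc : (0:ℝ) < (T.card:ℝ) ^ c := Real.rpow_pos_of_pos hTcard _
    have : (S.card : ℝ) * ((a/2) ^ c * (T.card:ℝ) ^ c) ≤ (∑ x ∈ S, w m x) * (T.card:ℝ) ^ c := by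
      calc (S.card : ℝ) * ((a/2) ^ c * (T.card:ℝ) ^ c)
          = (S.card : ℝ) * (a/2 * (T.card:ℝ)) ^ c := by rw [h2]
        _ ≤ (S.card : ℝ) * (∑ x ∈ T, w m x) ^ c :=
            mul_le_mul_of_nonneg_left h1 (by positivity)
        _ ≤ (∑ x ∈ S, w m x) * (T.card:ℝ) ^ c := hmain
    have := (mul_le_mul_iff_of_pos_right hTc).mp (by linarith [this] : (S.card : ℝ) * (a/2) ^ c * (T.card:ℝ) ^ c ≤ (∑ x ∈ S, w m x) * (T.card:ℝ) ^ c)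
    exact this
  -- (a/2)^c = 2^(-1/24)
  have hac : (a/2) ^ c = (2:ℝ) ^ (-(1/24) : ℝ) := by
    have h2a : (0:ℝ) < 2 / a := by positivity
    have hrw : a / 2 = (2:ℝ) ^ (-L) := by
      rw [Real.rpow_neg (by norm_num), hLdef, Real.rpow_logb (by norm_num) (by norm_num) h2a]
      field_simp
    rw [hrw, ← Real.rpow_mul (by norm_num : (0:ℝ) ≤ 2)]
    congr 1
    rw [hcdef]
    field_simp
  rw [hac] at hfinal
  have h34 := key34
  nlinarith [hfinal, hScard, h34, Real.rpow_pos_of_pos (show (0:ℝ) < 2 by norm_num) (-(1/24):ℝ)]
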